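/- Let f ∈ ℝ[x] be a nonconstant polynomial with positive leading coefficient, and let v be a real number such that every complex root α of f satisfies Re(α) < v. Then all coefficients of the shifted polynomial g(x) = f(x + v) are nonnegative; consequently, |f(v − t)| ≤ |f(v + t)| for every real t ≥ 0. -/
import Mathlib

open Polynomial

lemma mul_coeff_nn {p q : Polynomial ℝ} (hp : ∀ i, 0 ≤ p.coeff i)
    (hq : ∀ i, 0 ≤ q.coeff i) : ∀ i, 0 ≤ (p * q).coeff i := by
  intro i
  rw [coeff_mul]
  exact Finset.sum_nonneg fun x _ => mul_nonneg (hp _) (hq _)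

lemma key : ∀ n (g : Polynomial ℝ), g.natDegree ≤ n → 0 < g.leadingCoeff →
    (∀ α : ℂ, aeval α g = 0 → α.re < 0) → ∀ i, 0 ≤ g.coeff i := by
  intro n
  induction n with
  | zero =>
    intro g hdeg hl _ i
    rcases Nat.eq_zero_of_le_zero hdeg with h0
    rcases eq_or_ne i 0 with rfl | hi
    · rw [← h0, ← leadingCoeff]; exact hl.le
    · rw [coeff_eq_zero_of_natDegree_lt (by omega : g.natDegree < i)]
  | succ n ih =>
    intro g hdeg hl hroots i
    have hg0 : g ≠ 0 := fun h => by simp [h, leadingCoeff_zero] at hl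
    rcases Nat.eq_zero_or_pos g.natDegree with h0 | hpos
    · rcases eq_or_ne i 0 with rfl | hi
      · rw [← h0, ← leadingCoeff]; exact hl.le
      · rw [coeff_eq_zero_of_natDegree_lt (by omega : g.natDegree < i)]
    · -- g has a complex root
      have hmapne : (g.map (algebraMap ℝ ℂ)).natDegree ≠ 0 := by
        rw [natDegree_map_eq_of_injective (algebraMap ℝ ℂ).injective]
        omega
      obtain ⟨z, hz⟩ := Complex.exists_root
        (natDegree_pos_iff_degree_pos.mp (Nat.pos_of_ne_zero hmapne))
      have hzg : aeval z g = 0 := by rwa [aeval_def, eval₂_eq_eval_map]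
      have hzre : z.re < 0 := hroots z hzg
      rcases eq_or_ne z.im 0 with him | him
      · -- real root
        set r := z.re with hr
        have hzr : z = (r : ℂ) := Complex.ext rfl him
        have hgr : g.IsRoot r := by
          have : (algebraMap ℝ ℂ) (g.eval r) = 0 := by
            rw [← aeval_algebraMap_apply_eq_algebraMap_eval]
            simpa [← hzr] using hzg
          exact (map_eq_zero_iff _ (algebraMap ℝ ℂ).injective).mp this
        obtain ⟨q, hq⟩ := (dvd_iff_isRoot).mpr hgr
        have hXr : (X - C r) ≠ (0 : Polynomial ℝ) := X_sub_C_ne_zero r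
        have hq0 : q ≠ 0 := fun h => hg0 (by simp [hq, h])
        have hlead : g.leadingCoeff = q.leadingCoeff := by
          rw [hq, leadingCoeff_mul, (monic_X_sub_C r).leadingCoeff, one_mul]
        have hdq : q.natDegree ≤ n := by
          have := natDegree_mul hXr hq0
          rw [← hq, natDegree_X_sub_C] at this
          omega
        have hqcoeff := ih q hdq (hlead ▸ hl) (fun β hβ => hroots β (by
          rw [hq]; simp [hβ]))
        rw [hq]
        refine mul_coeff_nn ?_ hqcoeff i
        intro j
        match j with
        | 0 => simp [coeff_sub, coeff_X, coeff_C]; linarith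
        | 1 => simp [coeff_sub, coeff_X, coeff_C]
        | j+2 => rw [coeff_eq_zero_of_natDegree_lt (by rw [natDegree_X_sub_C]; omega)]
      · -- complex conjugate pair
        obtain ⟨q, hq⟩ := g.quadratic_dvd_of_aeval_eq_zero_im_ne_zero hzg him
        set p : Polynomial ℝ := X ^ 2 - C (2 * z.re) * X + C (‖z‖ ^ 2) with hp
        have hpm : p.Monic := by unfold p; monicity!
        have hp0 : p ≠ 0 := hpm.ne_zero
        have hq0 : q ≠ 0 := fun h => hg0 (by simp [hq, h])
        have hpd : p.natDegree = 2 := by unfold p; compute_degree!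
        have hlead : g.leadingCoeff = q.leadingCoeff := by
          rw [hq, leadingCoeff_mul, hpm.leadingCoeff, one_mul]
        have hdq : q.natDegree ≤ n := by
          have := natDegree_mul hp0 hq0
          rw [← hq, hpd] at this
          omega
        have hqcoeff := ih q hdq (hlead ▸ hl) (fun β hβ => hroots β (by
          rw [hq]; simp [hβ]))
        rw [hq]
        refine mul_coeff_nn ?_ hqcoeff i
        obtain ⟨b, hb0, hpb⟩ : ∃ b, 0 ≤ b ∧ p = X ^ 2 - C (2 * z.re) * X + C b :=
          ⟨‖z‖ ^ 2, sq_nonneg _, hp⟩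
        intro j
        match j with
        | 0 => rw [hpb]; simpa using hb0
        | 1 => rw [hpb]; simp; linarith
        | 2 => rw [hpb]; simp
        | j+3 => rw [coeff_eq_zero_of_natDegree_lt (by rw [hpd]; omega)]

/-- If `f ∈ ℝ[x]` is nonconstant with positive leading coefficient and every
complex root `α` of `f` satisfies `Re α < v`, then all coefficients of `g(x) = f(x + v)` are
nonnegative; consequently `|f(v - t)| ≤ |f(v + t)|` for all real `t ≥ 0`. -/
theorem stmt_12 (f : Polynomial ℝ) (hf : 0 < f.natDegree) (hlead : 0 < f.leadingCoeff)
    (v : ℝ) (hroots : ∀ α : ℂ, Polynomial.aeval α f = 0 → α.re < v) :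
    (∀ i, 0 ≤ (f.comp (X + C v)).coeff i) ∧
      ∀ t : ℝ, 0 ≤ t → |f.eval (v - t)| ≤ |f.eval (v + t)| := by
  set g := f.comp (X + C v) with hgdef
  have hlin : (X + C v : Polynomial ℝ).natDegree = 1 := natDegree_X_add_C v
  have hglead : 0 < g.leadingCoeff := by
    rw [hgdef, leadingCoeff_comp (by omega)]
    simp [leadingCoeff_X_add_C]
    exact hlead
  have hgroots : ∀ β : ℂ, aeval β g = 0 → β.re < 0 := by
    intro β hβ
    rw [hgdef, aeval_comp] at hβ
    have : aeval (β + (v : ℂ)) f = 0 := by simpa using hβ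
    have := hroots _ this
    simp at this
    linarith
  have hcoeff : ∀ i, 0 ≤ g.coeff i := key g.natDegree g le_rfl hglead hgroots
  refine ⟨hcoeff, ?_⟩
  intro t ht
  have he : ∀ s : ℝ, f.eval (v + s) = g.eval s := by
    intro s
    rw [hgdef, eval_comp]
    simp [add_comm]
  have h1 : f.eval (v + t) = g.eval t := he t
  have h2 : f.eval (v - t) = g.eval (-t) := by rw [← he (-t)]; ring_nf
  rw [h1, h2]
  have hnn : 0 ≤ g.eval t := by
    rw [eval_eq_sum_range]
    exact Finset.sum_nonneg fun i _ => mul_nonneg (hcoeff i) (pow_nonneg ht i)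
  rw [abs_of_nonneg hnn]
  calc |g.eval (-t)| ≤ ∑ i ∈ Finset.range (g.natDegree + 1), |g.coeff i * (-t) ^ i| := by
        rw [eval_eq_sum_range]; exact Finset.abs_sum_le_sum_abs _ _
    _ = ∑ i ∈ Finset.range (g.natDegree + 1), g.coeff i * t ^ i := by
        refine Finset.sum_congr rfl fun i _ => ?_
        rw [abs_mul, abs_of_nonneg (hcoeff i), abs_pow, abs_neg, abs_of_nonneg ht]
    _ = g.eval t := (eval_eq_sum_range _).symm
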